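/- arXiv:2106.07189 — 2 statements merged into one kernel-verified Lean document; each statement's English description precedes it below -/
import Mathlib

section
/- Let X, X', S, V, G be real random variables such that (X, S, G, V) are mutually independent, X' is independent of G, E[X²] = E[X'²] = 1, E[V²] = σ², E[S²] ≤ Λ, E[X] = E[X'] = E[V] = 0, (X, V, G) is independent of the pair (X', S), and X' is independent of Z := G·√φ(G)·X + S + V − G·√φ(G)·X' with E[X'·Z] = 0. Then E[X'·S] = E[G·√φ(G)]. -/
open MeasureTheory ProbabilityTheory

/-- Key identity (eqs. (28)–(31)): under the stated independence and moment conditions,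
if `X'` is uncorrelated with `Z = G√φ(G)·X + S + V − G√φ(G)·X'`, then
`E[X'·S] = E[G·√φ(G)]`. -/
theorem Xprime_S_correlation
    {Ω : Type*} [MeasurableSpace Ω] (μ : Measure Ω) [IsProbabilityMeasure μ]
    (X X' S V G : Ω → ℝ) (φ : ℝ → ℝ) (σ2 Λ : ℝ)
    (hφ : Measurable φ) (hφ0 : ∀ g, 0 ≤ φ g)
    (hmX : Measurable X) (hmX' : Measurable X') (hmS : Measurable S)
    (hmV : Measurable V) (hmG : Measurable G)
    -- (X, S, G, V) mutually independent
    (hindep4 : iIndepFun (![X, S, G, V] : Fin 4 → Ω → ℝ) μ)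
    -- X' independent of G
    (hX'G : IndepFun X' G μ)
    -- (X, V, G) independent of (X', S)
    (hpair : IndepFun (fun ω => (X ω, V ω, G ω)) (fun ω => (X' ω, S ω)) μ)
    -- moments
    (hX2 : ∫ ω, (X ω) ^ 2 ∂μ = 1) (hX'2 : ∫ ω, (X' ω) ^ 2 ∂μ = 1)
    (hV2 : ∫ ω, (V ω) ^ 2 ∂μ = σ2) (hS2 : ∫ ω, (S ω) ^ 2 ∂μ ≤ Λ)
    (hXm : ∫ ω, X ω ∂μ = 0) (hX'm : ∫ ω, X' ω ∂μ = 0) (hVm : ∫ ω, V ω ∂μ = 0)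
    -- integrability of all relevant products
    (hi1 : Integrable (fun ω => X' ω * S ω) μ)
    (hi2 : Integrable (fun ω => G ω * Real.sqrt (φ (G ω))) μ)
    (hi3 : Integrable (fun ω =>
      X' ω * (G ω * Real.sqrt (φ (G ω)) * X ω + S ω + V ω
        - G ω * Real.sqrt (φ (G ω)) * X' ω)) μ)
    -- X' uncorrelated with Z (consequence of `(X', G, Z)` independent with `E X' = 0`)
    (hX'Z : ∫ ω, X' ω * (G ω * Real.sqrt (φ (G ω)) * X ω + S ω + V ω
        - G ω * Real.sqrt (φ (G ω)) * X' ω) ∂μ = 0) :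
    ∫ ω, X' ω * S ω ∂μ = ∫ ω, G ω * Real.sqrt (φ (G ω)) ∂μ := by
  have hsq : Measurable (fun g : ℝ => g * Real.sqrt (φ g)) :=
    measurable_id.mul (Real.continuous_sqrt.measurable.comp hφ)
  set c : Ω → ℝ := fun ω => G ω * Real.sqrt (φ (G ω)) with hcdef
  have hmc : Measurable c := hsq.comp hmG
  -- integrability of squares and of X, X'
  have hX2int : Integrable (fun ω => X ω ^ 2) μ := by
    by_contra h; rw [integral_undef h] at hX2; norm_num at hX2
  have hX'2int : Integrable (fun ω => X' ω ^ 2) μ := by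
    by_contra h; rw [integral_undef h] at hX'2; norm_num at hX'2
  have hXint : Integrable X μ := by
    refine (hX2int.add (integrable_const 1)).mono' hmX.aestronglyMeasurable ?_
    filter_upwards with ω
    have h1 : |X ω| ≤ X ω ^ 2 + 1 := by nlinarith [sq_nonneg (|X ω| - 1), abs_nonneg (X ω), sq_abs (X ω)]
    simpa [Real.norm_eq_abs] using h1
  have hX'int : Integrable X' μ := by
    refine (hX'2int.add (integrable_const 1)).mono' hmX'.aestronglyMeasurable ?_
    filter_upwards with ω
    have h1 : |X' ω| ≤ X' ω ^ 2 + 1 := by nlinarith [sq_nonneg (|X' ω| - 1), abs_nonneg (X' ω), sq_abs (X' ω)]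
    simpa [Real.norm_eq_abs] using h1
  -- independences
  have hGX : IndepFun G X μ := by
    have := hindep4.indepFun (i := 2) (j := 0) (by decide)
    simpa using this
  have hcX : IndepFun c X μ := by
    have := hGX.comp hsq measurable_id
    exact this
  have hcX'2 : IndepFun c (fun ω => X' ω ^ 2) μ := by
    have := hX'G.symm.comp hsq (measurable_id.pow_const 2)
    exact this
  have hcXX' : IndepFun (fun ω => c ω * X ω) X' μ := by
    have := hpair.comp
      (show Measurable (fun p : ℝ × ℝ × ℝ => p.2.2 * Real.sqrt (φ p.2.2) * p.1) from
        (hsq.comp (measurable_snd.comp measurable_snd)).mul measurable_fst)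
      (measurable_fst : Measurable (fun p : ℝ × ℝ => p.1))
    exact this
  have hVX' : IndepFun V X' μ := by
    have := hpair.comp
      (measurable_fst.comp measurable_snd : Measurable (fun p : ℝ × ℝ × ℝ => p.2.1))
      (measurable_fst : Measurable (fun p : ℝ × ℝ => p.1))
    exact this
  -- integrability of the individual product terms
  have hcXint : Integrable (fun ω => c ω * X ω) μ := by
    have := hcX.integrable_mul hi2 hXint
    exact this
  have ht1 : Integrable (fun ω => c ω * X ω * X' ω) μ := by
    have := hcXX'.integrable_mul hcXint hX'int
    exact this
  have ht4 : Integrable (fun ω => c ω * X' ω ^ 2) μ := by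
    have := hcX'2.integrable_mul hi2 hX'2int
    exact this
  have ht3 : Integrable (fun ω => V ω * X' ω) μ := by
    have : (fun ω => V ω * X' ω) = fun ω =>
        (X' ω * (G ω * Real.sqrt (φ (G ω)) * X ω + S ω + V ω
          - G ω * Real.sqrt (φ (G ω)) * X' ω)
        - X' ω * S ω - c ω * X ω * X' ω) + c ω * X' ω ^ 2 := by
      funext ω; simp only [hcdef]; ring
    rw [this]
    exact ((hi3.sub hi1).sub ht1).add ht4
  -- split the integral of X'·Z
  have hsplit : ∫ ω, X' ω * (G ω * Real.sqrt (φ (G ω)) * X ω + S ω + V ω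
      - G ω * Real.sqrt (φ (G ω)) * X' ω) ∂μ
      = (∫ ω, c ω * X ω * X' ω ∂μ) + (∫ ω, X' ω * S ω ∂μ)
        + (∫ ω, V ω * X' ω ∂μ) - ∫ ω, c ω * X' ω ^ 2 ∂μ := by
    have heq : (fun ω => X' ω * (G ω * Real.sqrt (φ (G ω)) * X ω + S ω + V ω
        - G ω * Real.sqrt (φ (G ω)) * X' ω))
        = fun ω => c ω * X ω * X' ω + X' ω * S ω + V ω * X' ω - c ω * X' ω ^ 2 := by
      funext ω; simp only [hcdef]; ring
    have e1 := integral_sub (μ := μ)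
      (f := fun ω => c ω * X ω * X' ω + X' ω * S ω + V ω * X' ω)
      (g := fun ω => c ω * X' ω ^ 2) ((ht1.add hi1).add ht3) ht4
    have e2 := integral_add (μ := μ)
      (f := fun ω => c ω * X ω * X' ω + X' ω * S ω)
      (g := fun ω => V ω * X' ω) (ht1.add hi1) ht3
    have e3 := integral_add (μ := μ)
      (f := fun ω => c ω * X ω * X' ω)
      (g := fun ω => X' ω * S ω) ht1 hi1
    rw [heq, e1, e2, e3]
  -- evaluate the three known terms
  have hE1 : ∫ ω, c ω * X ω * X' ω ∂μ = 0 := by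
    have := hcXX'.integral_fun_mul_eq_mul_integral (hmc.mul hmX).aestronglyMeasurable hmX'.aestronglyMeasurable
    rw [hX'm, mul_zero] at this
    simpa using this
  have hE3 : ∫ ω, V ω * X' ω ∂μ = 0 := by
    have := hVX'.integral_fun_mul_eq_mul_integral hmV.aestronglyMeasurable hmX'.aestronglyMeasurable
    rw [hX'm, mul_zero] at this
    simpa using this
  have hE4 : ∫ ω, c ω * X' ω ^ 2 ∂μ = ∫ ω, G ω * Real.sqrt (φ (G ω)) ∂μ := by
    have := hcX'2.integral_fun_mul_eq_mul_integral hmc.aestronglyMeasurable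
      (hmX'.pow_const 2).aestronglyMeasurable
    rw [hX'2, mul_one] at this
    simpa [hcdef] using this
  rw [hsplit, hE1, hE3, hE4] at hX'Z
  linarith
end

section
/- Let G be a real random variable and φ: ℝ → ℝ≥0 measurable such that Var(G·√φ(G)) > 0. Suppose real random variables X, X', S, V satisfy: (X, S, G, V) mutually independent, all zero-mean with E[X²] = E[X'²] = 1, E[V²] = σ², (X, V, G) independent of (X', S), E[X'·S] = E[G·√φ(G)], and E[(S+V)²] ≥ E[(G·√φ(G)·X + S + V − G·√φ(G)·X')²]. Then we reach a contradiction; i.e., these conditions cannot all hold simultaneously. -/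
open MeasureTheory ProbabilityTheory

private lemma l2_mul_integrable {Ω : Type*} [MeasurableSpace Ω] {μ : Measure Ω}
    {f g : Ω → ℝ} (hf : MemLp f 2 μ) (hg : MemLp g 2 μ) :
    Integrable (fun ω => f ω * g ω) μ := by
  refine (hf.integrable_sq.add hg.integrable_sq).mono'
    (hf.aestronglyMeasurable.mul hg.aestronglyMeasurable) ?_
  filter_upwards with ω
  simp only [Pi.add_apply]
  rw [Real.norm_eq_abs, abs_mul]
  nlinarith [sq_nonneg (|f ω| - |g ω|), sq_abs (f ω), sq_abs (g ω),
    abs_nonneg (f ω), abs_nonneg (g ω)]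

/-- The key algebraic/linearity step: from the expansion of the quadratic,
the independence factorizations (given as integral identities) force
`∫ W² - (∫ W)² ≤ 0`. -/
private lemma key_ineq {Ω : Type*} [MeasurableSpace Ω] {μ : Measure Ω}
    (W X X' S V : Ω → ℝ)
    (i1 : Integrable (fun ω => W ω ^ 2 * X ω ^ 2) μ)
    (i2 : Integrable (fun ω => W ω ^ 2 * X' ω ^ 2) μ)
    (i3 : Integrable (fun ω => W ω ^ 2 * X ω * X' ω) μ)
    (i4 : Integrable (fun ω => W ω * (X ω * S ω)) μ)
    (i5 : Integrable (fun ω => W ω * (X ω * V ω)) μ)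
    (i6 : Integrable (fun ω => W ω * (X' ω * S ω)) μ)
    (i7 : Integrable (fun ω => W ω * V ω * X' ω) μ)
    (i8 : Integrable (fun ω => (S ω + V ω) ^ 2) μ)
    (h1 : ∫ ω, W ω ^ 2 * X ω ^ 2 ∂μ = ∫ ω, W ω ^ 2 ∂μ)
    (h2 : ∫ ω, W ω ^ 2 * X' ω ^ 2 ∂μ = ∫ ω, W ω ^ 2 ∂μ)
    (h3 : ∫ ω, W ω ^ 2 * X ω * X' ω ∂μ = 0)
    (h4 : ∫ ω, W ω * (X ω * S ω) ∂μ = 0)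
    (h5 : ∫ ω, W ω * (X ω * V ω) ∂μ = 0)
    (h6 : ∫ ω, W ω * (X' ω * S ω) ∂μ = (∫ ω, W ω ∂μ) * (∫ ω, W ω ∂μ))
    (h7 : ∫ ω, W ω * V ω * X' ω ∂μ = 0)
    (hineq : ∫ ω, (W ω * X ω + S ω + V ω - W ω * X' ω) ^ 2 ∂μ
        ≤ ∫ ω, (S ω + V ω) ^ 2 ∂μ) :
    ∫ ω, W ω ^ 2 ∂μ - (∫ ω, W ω ∂μ) ^ 2 ≤ 0 := by
  have hexp : (fun ω => (W ω * X ω + S ω + V ω - W ω * X' ω) ^ 2)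
      = fun ω => W ω ^ 2 * X ω ^ 2 + (W ω ^ 2 * X' ω ^ 2 +
        ((-2 : ℝ) * (W ω ^ 2 * X ω * X' ω) + ((2 : ℝ) * (W ω * (X ω * S ω)) +
        ((2 : ℝ) * (W ω * (X ω * V ω)) + ((-2 : ℝ) * (W ω * (X' ω * S ω)) +
        ((-2 : ℝ) * (W ω * V ω * X' ω) + (S ω + V ω) ^ 2)))))) := by
    funext ω; ring
  rw [hexp] at hineq
  have j7 : Integrable (fun ω => (-2 : ℝ) * (W ω * V ω * X' ω) + (S ω + V ω) ^ 2) μ :=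
    (i7.const_mul _).add i8
  have j6 : Integrable (fun ω => (-2 : ℝ) * (W ω * (X' ω * S ω)) +
      ((-2 : ℝ) * (W ω * V ω * X' ω) + (S ω + V ω) ^ 2)) μ := (i6.const_mul _).add j7
  have j5 : Integrable (fun ω => (2 : ℝ) * (W ω * (X ω * V ω)) +
      ((-2 : ℝ) * (W ω * (X' ω * S ω)) +
      ((-2 : ℝ) * (W ω * V ω * X' ω) + (S ω + V ω) ^ 2))) μ := (i5.const_mul _).add j6
  have j4 : Integrable (fun ω => (2 : ℝ) * (W ω * (X ω * S ω)) +
      ((2 : ℝ) * (W ω * (X ω * V ω)) + ((-2 : ℝ) * (W ω * (X' ω * S ω)) +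
      ((-2 : ℝ) * (W ω * V ω * X' ω) + (S ω + V ω) ^ 2)))) μ := (i4.const_mul _).add j5
  have j3 : Integrable (fun ω => (-2 : ℝ) * (W ω ^ 2 * X ω * X' ω) +
      ((2 : ℝ) * (W ω * (X ω * S ω)) + ((2 : ℝ) * (W ω * (X ω * V ω)) +
      ((-2 : ℝ) * (W ω * (X' ω * S ω)) +
      ((-2 : ℝ) * (W ω * V ω * X' ω) + (S ω + V ω) ^ 2))))) μ := (i3.const_mul _).add j4
  have j2 : Integrable (fun ω => W ω ^ 2 * X' ω ^ 2 +
      ((-2 : ℝ) * (W ω ^ 2 * X ω * X' ω) + ((2 : ℝ) * (W ω * (X ω * S ω)) +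
      ((2 : ℝ) * (W ω * (X ω * V ω)) + ((-2 : ℝ) * (W ω * (X' ω * S ω)) +
      ((-2 : ℝ) * (W ω * V ω * X' ω) + (S ω + V ω) ^ 2)))))) μ := i2.add j3
  rw [integral_add i1 j2, integral_add i2 j3, integral_add (i3.const_mul _) j4,
    integral_add (i4.const_mul _) j5, integral_add (i5.const_mul _) j6,
    integral_add (i6.const_mul _) j7, integral_add (i7.const_mul _) i8,
    integral_const_mul _ _, integral_const_mul _ _, integral_const_mul _ _, integral_const_mul _ _,
    integral_const_mul _ _, h1, h2, h3, h4, h5, h6, h7] at hineq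
  nlinarith [hineq]

/-- Contradiction step: if `Var(G√φ(G)) > 0`, the stated independence/moment conditions,
`E[X'S] = E[G√φ(G)]`, and `E[(S+V)²] ≥ E[(G√φ(G)X + S + V − G√φ(G)X')²]`
cannot all hold simultaneously. -/
theorem symmetrization_contradiction
    {Ω : Type*} [MeasurableSpace Ω] (μ : Measure Ω) [IsProbabilityMeasure μ]
    (X X' S V G : Ω → ℝ) (φ : ℝ → ℝ) (σ2 : ℝ)
    (hφ : Measurable φ) (hφ0 : ∀ g, 0 ≤ φ g)
    (hmX : Measurable X) (hmX' : Measurable X') (hmS : Measurable S)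
    (hmV : Measurable V) (hmG : Measurable G)
    -- positive variance of G√φ(G)
    (hvar : 0 < variance (fun ω => G ω * Real.sqrt (φ (G ω))) μ)
    (hL2 : MemLp (fun ω => G ω * Real.sqrt (φ (G ω))) 2 μ)
    -- (X, S, G, V) mutually independent
    (hindep4 : iIndepFun (β := fun _ : Fin 4 => ℝ)
      ![X, S, G, V] μ)
    -- X' independent of G
    (hX'G : IndepFun X' G μ)
    -- (X, V, G) independent of (X', S)
    (hpair : IndepFun (fun ω => (X ω, V ω, G ω)) (fun ω => (X' ω, S ω)) μ)
    -- zero means and second moments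
    (hXm : ∫ ω, X ω ∂μ = 0) (hX'm : ∫ ω, X' ω ∂μ = 0)
    (hSm : ∫ ω, S ω ∂μ = 0) (hVm : ∫ ω, V ω ∂μ = 0)
    (hX2 : ∫ ω, (X ω) ^ 2 ∂μ = 1) (hX'2 : ∫ ω, (X' ω) ^ 2 ∂μ = 1)
    (hV2 : ∫ ω, (V ω) ^ 2 ∂μ = σ2)
    (hXL2 : MemLp X 2 μ) (hX'L2 : MemLp X' 2 μ) (hSL2 : MemLp S 2 μ)
    (hVL2 : MemLp V 2 μ)
    -- the correlation identity
    (hcorr : ∫ ω, X' ω * S ω ∂μ = ∫ ω, G ω * Real.sqrt (φ (G ω)) ∂μ)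
    -- the norm inequality from the decoder
    (hineq : ∫ ω, (G ω * Real.sqrt (φ (G ω)) * X ω + S ω + V ω
        - G ω * Real.sqrt (φ (G ω)) * X' ω) ^ 2 ∂μ ≤ ∫ ω, (S ω + V ω) ^ 2 ∂μ) :
    False := by
  classical
  -- notation
  set W : Ω → ℝ := fun ω => G ω * Real.sqrt (φ (G ω)) with hWdef
  have hfW : Measurable (fun g : ℝ => g * Real.sqrt (φ g)) :=
    measurable_id.mul (hφ.sqrt)
  have hmW : Measurable W := hmG.mul ((hφ.comp hmG).sqrt)
  -- measurability of the 4-tuple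
  have hmeas4 : ∀ i, Measurable (![X, S, G, V] i) := by
    intro i
    fin_cases i <;>
      simp only [Matrix.cons_val_zero, Matrix.cons_val_one, Matrix.head_cons,
        Matrix.cons_val_two, Matrix.tail_cons, Matrix.cons_val_three] <;>
      assumption
  -- pairwise / grouped independences
  have hXG : IndepFun X G μ := by
    simpa using hindep4.indepFun (show (0 : Fin 4) ≠ 2 by decide)
  have hXS : IndepFun X S μ := by
    simpa using hindep4.indepFun (show (0 : Fin 4) ≠ 1 by decide)
  have hXV : IndepFun X V μ := by
    simpa using hindep4.indepFun (show (0 : Fin 4) ≠ 3 by decide)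
  have hXSG : IndepFun (fun ω => (X ω, S ω)) G μ := by
    simpa using hindep4.indepFun_prodMk hmeas4 0 1 2 (by decide) (by decide)
  have hXVG : IndepFun (fun ω => (X ω, V ω)) G μ := by
    simpa using hindep4.indepFun_prodMk hmeas4 0 3 2 (by decide) (by decide)
  -- derived independences involving W
  have hW2X2 : IndepFun (fun ω => W ω ^ 2) (fun ω => X ω ^ 2) μ :=
    hXG.symm.comp (hfW.pow_const 2) (measurable_id.pow_const 2)
  have hW2X'2 : IndepFun (fun ω => W ω ^ 2) (fun ω => X' ω ^ 2) μ :=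
    hX'G.symm.comp (hfW.pow_const 2) (measurable_id.pow_const 2)
  have hW2X : IndepFun (fun ω => W ω ^ 2) X μ :=
    hXG.symm.comp (hfW.pow_const 2) measurable_id
  have hW_XS : IndepFun W (fun ω => X ω * S ω) μ :=
    hXSG.symm.comp hfW (measurable_fst.mul measurable_snd)
  have hW_XV : IndepFun W (fun ω => X ω * V ω) μ :=
    hXVG.symm.comp hfW (measurable_fst.mul measurable_snd)
  have hW_X'S : IndepFun W (fun ω => X' ω * S ω) μ :=
    hpair.comp (hfW.comp (measurable_snd.snd)) (measurable_fst.mul measurable_snd)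
  have hWV_X' : IndepFun (fun ω => W ω * V ω) X' μ :=
    hpair.comp ((hfW.comp measurable_snd.snd).mul measurable_snd.fst) measurable_fst
  have hW2X_X' : IndepFun (fun ω => W ω ^ 2 * X ω) X' μ :=
    hpair.comp (((hfW.comp measurable_snd.snd).pow_const 2).mul measurable_fst)
      measurable_fst
  -- integrabilities
  have iW : Integrable W μ := hL2.integrable one_le_two
  have iX : Integrable X μ := hXL2.integrable one_le_two
  have iX' : Integrable X' μ := hX'L2.integrable one_le_two
  have iS : Integrable S μ := hSL2.integrable one_le_two
  have iV : Integrable V μ := hVL2.integrable one_le_two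
  have iW2 : Integrable (fun ω => W ω ^ 2) μ := hL2.integrable_sq
  have iX2 : Integrable (fun ω => X ω ^ 2) μ := hXL2.integrable_sq
  have iX'2 : Integrable (fun ω => X' ω ^ 2) μ := hX'L2.integrable_sq
  have i1 : Integrable (fun ω => W ω ^ 2 * X ω ^ 2) μ := hW2X2.integrable_mul iW2 iX2
  have i2 : Integrable (fun ω => W ω ^ 2 * X' ω ^ 2) μ := hW2X'2.integrable_mul iW2 iX'2
  have iW2X : Integrable (fun ω => W ω ^ 2 * X ω) μ := hW2X.integrable_mul iW2 iX
  have i3 : Integrable (fun ω => W ω ^ 2 * X ω * X' ω) μ := hW2X_X'.integrable_mul iW2X iX'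
  have iXS : Integrable (fun ω => X ω * S ω) μ := hXS.integrable_mul iX iS
  have iXV : Integrable (fun ω => X ω * V ω) μ := hXV.integrable_mul iX iV
  have i4 : Integrable (fun ω => W ω * (X ω * S ω)) μ := hW_XS.integrable_mul iW iXS
  have i5 : Integrable (fun ω => W ω * (X ω * V ω)) μ := hW_XV.integrable_mul iW iXV
  have iX'S : Integrable (fun ω => X' ω * S ω) μ := l2_mul_integrable hX'L2 hSL2
  have i6 : Integrable (fun ω => W ω * (X' ω * S ω)) μ := hW_X'S.integrable_mul iW iX'S
  have iWV : Integrable (fun ω => W ω * V ω) μ := l2_mul_integrable hL2 hVL2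
  have i7 : Integrable (fun ω => W ω * V ω * X' ω) μ := hWV_X'.integrable_mul iWV iX'
  have i8 : Integrable (fun ω => (S ω + V ω) ^ 2) μ := (hSL2.add hVL2).integrable_sq
  -- moment factorizations
  have h1 : ∫ ω, W ω ^ 2 * X ω ^ 2 ∂μ = ∫ ω, W ω ^ 2 ∂μ := by
    rw [hW2X2.integral_fun_mul_eq_mul_integral (hmW.pow_const 2).aestronglyMeasurable
      (hmX.pow_const 2).aestronglyMeasurable, hX2, mul_one]
  have h2 : ∫ ω, W ω ^ 2 * X' ω ^ 2 ∂μ = ∫ ω, W ω ^ 2 ∂μ := by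
    rw [hW2X'2.integral_fun_mul_eq_mul_integral (hmW.pow_const 2).aestronglyMeasurable
      (hmX'.pow_const 2).aestronglyMeasurable, hX'2, mul_one]
  have h3 : ∫ ω, W ω ^ 2 * X ω * X' ω ∂μ = 0 := by
    rw [hW2X_X'.integral_fun_mul_eq_mul_integral ((hmW.pow_const 2).mul hmX).aestronglyMeasurable
      hmX'.aestronglyMeasurable, hX'm, mul_zero]
  have h4 : ∫ ω, W ω * (X ω * S ω) ∂μ = 0 := by
    rw [hW_XS.integral_fun_mul_eq_mul_integral hmW.aestronglyMeasurable
      (hmX.mul hmS).aestronglyMeasurable,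
      hXS.integral_fun_mul_eq_mul_integral hmX.aestronglyMeasurable hmS.aestronglyMeasurable, hXm,
      zero_mul, mul_zero]
  have h5 : ∫ ω, W ω * (X ω * V ω) ∂μ = 0 := by
    rw [hW_XV.integral_fun_mul_eq_mul_integral hmW.aestronglyMeasurable
      (hmX.mul hmV).aestronglyMeasurable,
      hXV.integral_fun_mul_eq_mul_integral hmX.aestronglyMeasurable hmV.aestronglyMeasurable, hXm,
      zero_mul, mul_zero]
  have h6 : ∫ ω, W ω * (X' ω * S ω) ∂μ = (∫ ω, W ω ∂μ) * (∫ ω, W ω ∂μ) := by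
    rw [hW_X'S.integral_fun_mul_eq_mul_integral hmW.aestronglyMeasurable
      (hmX'.mul hmS).aestronglyMeasurable, hcorr]
  have h7 : ∫ ω, W ω * V ω * X' ω ∂μ = 0 := by
    rw [hWV_X'.integral_fun_mul_eq_mul_integral (hmW.mul hmV).aestronglyMeasurable
      hmX'.aestronglyMeasurable, hX'm, mul_zero]
  have hkey : ∫ ω, W ω ^ 2 ∂μ - (∫ ω, W ω ∂μ) ^ 2 ≤ 0 := by
    have := key_ineq W X X' S V i1 i2 i3 i4 i5 i6 i7 i8 h1 h2 h3 h4 h5 h6 h7 hineq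
    nlinarith [this]
  have hv : variance W μ = ∫ ω, W ω ^ 2 ∂μ - (∫ ω, W ω ∂μ) ^ 2 := by
    rw [variance_eq_sub hL2]
    simp [Pi.pow_apply]
  rw [hv] at hvar
  linarith
end
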